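/- Let Z ∈ ℝ^{d×n} be partitioned into blocks Z₁,...,Z_k (n = ∑ n_j). Then ΔR(Z | Π) := R(Z) − ∑_j (n_j/n) R(Z_j) ≤ (1/(2n)) ∑_{j=1}^k ∑_p log[ (1 + (d/(nε²)) σ_p(Z_j)²)ⁿ / (1 + (d/(n_jε²)) σ_p(Z_j)²)^{n_j} ], with equality if and only if Z_jᵀZ_ℓ = 0 for all 1 ≤ j < ℓ ≤ k. -/

import Mathlib

open Matrix

noncomputable def codingRate {d : ℕ} {m : Type*} [Fintype m] (ε : ℝ)
    (Z : Matrix (Fin d) m ℝ) : ℝ :=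
  (1 / 2) * Real.log ((1 + ((d : ℝ) / (Fintype.card m * ε ^ 2)) • (Z * Zᵀ)).det)

noncomputable def sval {d n : ℕ} (A : Matrix (Fin d) (Fin n) ℝ) : Fin n → ℝ :=
  fun p => Real.sqrt ((Matrix.isHermitian_conjTranspose_mul_self A).eigenvalues
    (Tuple.sort ((Matrix.isHermitian_conjTranspose_mul_self A).eigenvalues) p.rev))

/-- The horizontal concatenation of a family of matrices `Z j : Matrix (Fin dz) (Fin (nj j)) ℝ`,
indexed by the sigma type of the column indices. -/
def blockConcat {dz k : ℕ} {nj : Fin k → ℕ}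
    (Z : (j : Fin k) → Matrix (Fin dz) (Fin (nj j)) ℝ) :
    Matrix (Fin dz) ((j : Fin k) × Fin (nj j)) ℝ :=
  Matrix.of fun i q => Z q.1 i q.2

set_option linter.unusedSectionVars false
set_option maxHeartbeats 1000000

section AuxLemmas
variable {m n : Type*} [Fintype m] [Fintype n] [DecidableEq m] [DecidableEq n]

lemma aux_ct_eq_t (A : Matrix m n ℝ) : Aᴴ = Aᵀ := by
  ext i j; simp [conjTranspose_apply]

lemma aux_symm {M : Matrix m m ℝ} (h : M.IsHermitian) (x y : m) : M x y = M y x := by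
  have := h.apply y x; rwa [star_trivial] at this

lemma aux_pd_add_psd {M N : Matrix m m ℝ} (hM : M.PosDef) (hN : N.PosSemidef) :
    (M + N).PosDef :=
  .of_dotProduct_mulVec_pos (hM.isHermitian.add hN.isHermitian) fun x hx => by
    rw [add_mulVec, dotProduct_add]
    exact add_pos_of_pos_of_nonneg (hM.dotProduct_mulVec_pos hx) (hN.dotProduct_mulVec_nonneg x)

lemma aux_psd_smul {M : Matrix m m ℝ} (hM : M.PosSemidef) {c : ℝ} (hc : 0 ≤ c) :
    (c • M).PosSemidef :=
  .of_dotProduct_mulVec_nonneg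
   (by unfold Matrix.IsHermitian; rw [conjTranspose_smul, hM.isHermitian]; simp)
   fun x => by
    rw [smul_mulVec, dotProduct_smul, smul_eq_mul]
    exact mul_nonneg hc (hM.dotProduct_mulVec_nonneg x)

lemma aux_pd_of_psd_det {M : Matrix m m ℝ} (hM : M.PosSemidef) (hd : M.det ≠ 0) :
    M.PosDef := by
  refine .of_dotProduct_mulVec_pos hM.isHermitian fun x hx => ?_
  have hmv : M *ᵥ x ≠ 0 := by
    intro h
    apply hx
    have := congrArg (fun v => M⁻¹ *ᵥ v) h
    simpa [Matrix.mulVec_mulVec, Matrix.nonsing_inv_mul M (isUnit_iff_ne_zero.mpr hd)]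
      using this
  have h0 : star x ⬝ᵥ M *ᵥ x ≠ 0 :=
    fun h => hmv ((hM.dotProduct_mulVec_zero_iff x).mp h)
  exact lt_of_le_of_ne (hM.dotProduct_mulVec_nonneg x) (Ne.symm h0)

lemma aux_det_one_add_smul {A : Matrix m m ℝ} (hA : A.IsHermitian) (c : ℝ) :
    (1 + c • A).det = ∏ i, (1 + c * hA.eigenvalues i) := by
  set V : Matrix m m ℝ := (hA.eigenvectorUnitary : Matrix m m ℝ)
  have hVV : V * star V = 1 := mem_unitaryGroup_iff.mp hA.eigenvectorUnitary.2
  have hspec : A = V * Matrix.diagonal hA.eigenvalues * star V := by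
    have := hA.spectral_theorem
    rwa [RCLike.ofReal_real_eq_id, Function.id_comp] at this
  have key : 1 + c • A = V * (1 + c • Matrix.diagonal hA.eigenvalues) * star V := by
    rw [Matrix.mul_add, Matrix.add_mul, Matrix.mul_one, hVV, mul_smul_comm, smul_mul_assoc,
      ← hspec]
  have hdiag : (1 + c • Matrix.diagonal hA.eigenvalues).det
      = ∏ i, (1 + c * hA.eigenvalues i) := by
    rw [show (1 : Matrix m m ℝ) + c • Matrix.diagonal hA.eigenvalues
        = Matrix.diagonal (fun i => 1 + c * hA.eigenvalues i) by
      rw [← Matrix.diagonal_one, ← Matrix.diagonal_smul, ← Matrix.diagonal_add]; rfl]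
    rw [Matrix.det_diagonal]
  have hu : V.det * (star V).det = 1 := by rw [← det_mul, hVV, det_one]
  rw [key, det_mul, det_mul, hdiag]
  calc V.det * (∏ i, (1 + c * hA.eigenvalues i)) * (star V).det
      = (V.det * (star V).det) * ∏ i, (1 + c * hA.eigenvalues i) := by ring
    _ = ∏ i, (1 + c * hA.eigenvalues i) := by rw [hu, one_mul]

lemma aux_det_one_add_psd {T : Matrix m m ℝ} (hT : T.PosSemidef) :
    1 ≤ (1 + T).det ∧ ((1 + T).det = 1 ↔ T = 0) := by
  have h1 : (1 + T).det = ∏ i, (1 + hT.isHermitian.eigenvalues i) := by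
    have := aux_det_one_add_smul hT.isHermitian 1
    simpa using this
  have hnn : ∀ i : m, 1 ≤ 1 + hT.isHermitian.eigenvalues i := fun i => by
    have := hT.eigenvalues_nonneg i; linarith
  constructor
  · rw [h1]
    calc (1:ℝ) = ∏ _i : m, 1 := by simp
      _ ≤ _ := Finset.prod_le_prod (by simp) (fun i _ => hnn i)
  · constructor
    · intro h
      rw [h1] at h
      have hev : ∀ i, hT.isHermitian.eigenvalues i = 0 := by
        intro i
        by_contra hne
        have hpos : 0 < hT.isHermitian.eigenvalues i :=
          lt_of_le_of_ne (hT.eigenvalues_nonneg i) (Ne.symm hne)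
        have hP : (1:ℝ) ≤ ∏ j ∈ Finset.univ.erase i, (1 + hT.isHermitian.eigenvalues j) := by
          calc (1:ℝ) = ∏ _j ∈ Finset.univ.erase i, (1:ℝ) := by simp
            _ ≤ _ := Finset.prod_le_prod (by simp) (fun j _ => hnn j)
        have hkey : (1 + hT.isHermitian.eigenvalues i) *
            (∏ j ∈ Finset.univ.erase i, (1 + hT.isHermitian.eigenvalues j)) = 1 := by
          rw [Finset.mul_prod_erase Finset.univ
            (fun j => 1 + hT.isHermitian.eigenvalues j) (Finset.mem_univ i)]
          exact h
        nlinarith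
      have hspec := hT.isHermitian.spectral_theorem
      rw [RCLike.ofReal_real_eq_id, Function.id_comp] at hspec
      rw [hspec]
      have : Matrix.diagonal hT.isHermitian.eigenvalues = 0 := by
        rw [show hT.isHermitian.eigenvalues = fun _ => 0 from funext hev]
        simp
      rw [this, map_zero]
    · rintro rfl; simp


lemma aux_det_le_det_add {X S : Matrix m m ℝ} (hX : X.PosDef) (hS : S.PosSemidef) :
    X.det ≤ (X + S).det ∧ ((X + S).det = X.det ↔ S = 0) := by
  have hXd := hX.det_pos
  obtain ⟨R, hRR, hRpsd⟩ : ∃ R : Matrix m m ℝ, R * R = X ∧ R.PosSemidef := by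
    open scoped MatrixOrder in
    exact ⟨CFC.sqrt X, CFC.sqrt_mul_sqrt_self X hX.posSemidef.nonneg,
      (CFC.sqrt_nonneg X).posSemidef⟩
  have hRdet : R.det ≠ 0 := by
    intro h
    rw [← hRR, det_mul, h, mul_zero] at hXd
    exact lt_irrefl _ hXd
  have hRunit : IsUnit R.det := isUnit_iff_ne_zero.mpr hRdet
  have hRinv_psd : (R⁻¹).PosSemidef :=
    (aux_pd_of_psd_det hRpsd hRdet).inv.posSemidef
  have hRinvH : (R⁻¹)ᴴ = R⁻¹ := hRinv_psd.isHermitian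
  set T := R⁻¹ * S * R⁻¹ with hTdef
  have hT : T.PosSemidef := by
    have := hS.conjTranspose_mul_mul_same (B := R⁻¹)
    rwa [hRinvH] at this
  have hXS : X + S = R * (1 + T) * R := by
    rw [Matrix.mul_add, Matrix.add_mul, Matrix.mul_one, hRR, hTdef]
    congr 1
    rw [show R * (R⁻¹ * S * R⁻¹) * R = (R * R⁻¹) * S * (R⁻¹ * R) by
      simp only [Matrix.mul_assoc],
      Matrix.mul_nonsing_inv R hRunit, Matrix.nonsing_inv_mul R hRunit,
      Matrix.one_mul, Matrix.mul_one]
  have hdet : (X + S).det = X.det * (1 + T).det := by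
    rw [hXS, det_mul, det_mul, ← hRR, det_mul]; ring
  obtain ⟨h1, h2⟩ := aux_det_one_add_psd hT
  constructor
  · rw [hdet]; nlinarith
  · rw [hdet]
    constructor
    · intro h
      have : (1 + T).det = 1 := by
        have h' : X.det * (1 + T).det = X.det * 1 := by rw [mul_one]; exact h
        exact mul_left_cancel₀ (ne_of_gt hXd) h'
      have hT0 : T = 0 := h2.mp this
      have : S = R * T * R := by
        rw [hTdef, show R * (R⁻¹ * S * R⁻¹) * R = (R * R⁻¹) * S * (R⁻¹ * R) by
          simp only [Matrix.mul_assoc],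
          Matrix.mul_nonsing_inv R hRunit, Matrix.nonsing_inv_mul R hRunit,
          Matrix.one_mul, Matrix.mul_one]
      rw [this, hT0, Matrix.mul_zero, Matrix.zero_mul]
    · rintro rfl
      have : T = 0 := by rw [hTdef]; simp
      rw [this]; simp

lemma aux_conj_zero_iff {A : Matrix m m ℝ} (hA : A.PosDef) (B : Matrix m n ℝ) :
    Bᵀ * A * B = 0 ↔ B = 0 := by
  constructor
  · intro h
    ext i j
    show B i j = 0
    by_contra hne
    have hc : (fun i => B i j) ≠ 0 := by
      intro h0; exact hne (by simpa using congrFun h0 i)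
    have hpos := hA.dotProduct_mulVec_pos hc
    have hentry : (Bᵀ * A * B) j j = star (fun i => B i j) ⬝ᵥ A *ᵥ (fun i => B i j) := by
      simp only [Matrix.mul_apply, Matrix.transpose_apply, dotProduct, Matrix.mulVec,
        star_trivial, Pi.star_apply, Finset.sum_mul, Finset.mul_sum]
      rw [Finset.sum_comm]
      exact Finset.sum_congr rfl fun a _ => Finset.sum_congr rfl fun b _ => by ring
    rw [h] at hentry
    simp only [Matrix.zero_apply] at hentry
    rw [← hentry] at hpos
    exact lt_irrefl _ hpos
  · rintro rfl; simp

lemma aux_pd_submatrix {M : Matrix n n ℝ} (hM : M.PosDef) {f : m → n}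
    (hf : Function.Injective f) : (M.submatrix f f).PosDef := by
  refine .of_dotProduct_mulVec_pos (by rw [Matrix.IsHermitian, conjTranspose_submatrix, hM.isHermitian]) ?_
  intro x hx
  set y : n → ℝ := Function.extend f x 0 with hy
  have hyf : ∀ i, y (f i) = x i := fun i => hf.extend_apply x 0 i
  have hsum : ∀ g : n → ℝ, ∑ j, y j * g j = ∑ i, x i * g (f i) := by
    intro g
    rw [show (∑ j, y j * g j) = ∑ j ∈ Finset.univ.image f, y j * g j by
      refine (Finset.sum_subset (Finset.subset_univ _) ?_).symm
      intro j _ hj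
      have : y j = 0 := by
        rw [hy, Function.extend_apply' _ _ _ (fun ⟨i, hi⟩ => hj (Finset.mem_image.mpr ⟨i, Finset.mem_univ i, hi⟩))]
        rfl
      rw [this, zero_mul]]
    rw [Finset.sum_image (fun a _ b _ h => hf h)]
    exact Finset.sum_congr rfl fun i _ => by rw [hyf]
  have inner : ∀ i : m, ∑ j' : n, M (f i) j' * y j' = ∑ i' : m, M (f i) (f i') * x i' := by
    intro i
    calc ∑ j' : n, M (f i) j' * y j' = ∑ j' : n, y j' * M (f i) j' :=
          Finset.sum_congr rfl fun _ _ => mul_comm _ _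
      _ = ∑ i' : m, x i' * M (f i) (f i') := hsum _
      _ = ∑ i' : m, M (f i) (f i') * x i' :=
          Finset.sum_congr rfl fun _ _ => mul_comm _ _
  have hyx : star x ⬝ᵥ (M.submatrix f f) *ᵥ x = star y ⬝ᵥ M *ᵥ y := by
    simp only [dotProduct, star_trivial, Pi.star_apply, Matrix.mulVec, Matrix.submatrix_apply]
    rw [hsum (fun j => ∑ j', M j j' * y j')]
    exact Finset.sum_congr rfl fun i _ => by rw [inner i]
  have hy0 : y ≠ 0 := by
    obtain ⟨i, hi⟩ := Function.ne_iff.mp hx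
    intro h0
    apply hi
    have := congrFun h0 (f i)
    rwa [hyf i] at this
  rw [hyx]
  exact hM.dotProduct_mulVec_pos hy0

lemma aux_fischer2 {α β : Type*} [Fintype α] [Fintype β] [DecidableEq α] [DecidableEq β]
    {N : Matrix (α ⊕ β) (α ⊕ β) ℝ} (hN : N.PosDef) :
    N.det ≤ N.toBlocks₁₁.det * N.toBlocks₂₂.det ∧
    (N.det = N.toBlocks₁₁.det * N.toBlocks₂₂.det ↔ N.toBlocks₁₂ = 0) := by
  have hApd : N.toBlocks₁₁.PosDef := aux_pd_submatrix hN Sum.inl_injective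
  have hDpd : N.toBlocks₂₂.PosDef := aux_pd_submatrix hN Sum.inr_injective
  have hC : N.toBlocks₂₁ = N.toBlocks₁₂ᵀ := by
    ext q a
    exact aux_symm hN.isHermitian _ _
  have hNblocks : N = fromBlocks N.toBlocks₁₁ N.toBlocks₁₂ N.toBlocks₁₂ᵀ N.toBlocks₂₂ := by
    rw [← hC, fromBlocks_toBlocks]
  haveI : Invertible N.toBlocks₁₁ :=
    N.toBlocks₁₁.invertibleOfIsUnitDet (isUnit_iff_ne_zero.mpr hApd.det_pos.ne')
  have hSpsd : (N.toBlocks₁₂ᵀ * N.toBlocks₁₁⁻¹ * N.toBlocks₁₂).PosSemidef := by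
    have := hApd.inv.posSemidef.conjTranspose_mul_mul_same (B := N.toBlocks₁₂)
    rwa [aux_ct_eq_t] at this
  have hdetN : N.det
      = N.toBlocks₁₁.det * (N.toBlocks₂₂ - N.toBlocks₁₂ᵀ * N.toBlocks₁₁⁻¹ * N.toBlocks₁₂).det := by
    conv_lhs => rw [hNblocks]
    rw [det_fromBlocks₁₁, invOf_eq_nonsing_inv]
  have hXpsd : (N.toBlocks₂₂ - N.toBlocks₁₂ᵀ * N.toBlocks₁₁⁻¹ * N.toBlocks₁₂).PosSemidef := by
    have h1 : (fromBlocks N.toBlocks₁₁ N.toBlocks₁₂ N.toBlocks₁₂ᴴ N.toBlocks₂₂).PosSemidef := by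
      rw [aux_ct_eq_t, ← hNblocks]; exact hN.posSemidef
    have := (Matrix.PosDef.fromBlocks₁₁ N.toBlocks₁₂ N.toBlocks₂₂ hApd).mp h1
    rwa [aux_ct_eq_t] at this
  have hXdetpos :
      0 < (N.toBlocks₂₂ - N.toBlocks₁₂ᵀ * N.toBlocks₁₁⁻¹ * N.toBlocks₁₂).det := by
    have h0 := hN.det_pos
    rw [hdetN] at h0
    by_contra hle
    push_neg at hle
    nlinarith [hApd.det_pos]
  have hXpd := aux_pd_of_psd_det hXpsd hXdetpos.ne'
  obtain ⟨hle1, heq1⟩ := aux_det_le_det_add hXpd hSpsd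
  rw [sub_add_cancel] at hle1 heq1
  have hSzero := aux_conj_zero_iff hApd.inv N.toBlocks₁₂
  constructor
  · rw [hdetN]
    have := hApd.det_pos
    nlinarith
  · rw [hdetN]
    constructor
    · intro h
      have h' : (N.toBlocks₂₂ - N.toBlocks₁₂ᵀ * N.toBlocks₁₁⁻¹ * N.toBlocks₁₂).det
          = N.toBlocks₂₂.det := by
        exact mul_left_cancel₀ hApd.det_pos.ne' h
      exact hSzero.mp (heq1.mp h'.symm)
    · intro h
      rw [show N.toBlocks₁₂ᵀ * N.toBlocks₁₁⁻¹ * N.toBlocks₁₂ = 0 from hSzero.mpr h]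
      simp

def sigE {k : ℕ} (nj : Fin (k+1) → ℕ) :
    (Fin (nj 0) ⊕ ((j : Fin k) × Fin (nj j.succ))) ≃ ((j : Fin (k+1)) × Fin (nj j)) where
  toFun x := Sum.elim (fun a => ⟨0, a⟩) (fun q => ⟨q.1.succ, q.2⟩) x
  invFun q := Fin.cases
    (motive := fun j => Fin (nj j) → (Fin (nj 0) ⊕ ((j : Fin k) × Fin (nj j.succ))))
    (fun a => Sum.inl a) (fun j b => Sum.inr ⟨j, b⟩) q.1 q.2
  left_inv x := by rcases x with a | ⟨j, b⟩ <;> simp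
  right_inv q := by
    rcases q with ⟨j, b⟩
    induction j using Fin.cases with
    | zero => simp
    | succ j => simp

lemma aux_fischer : ∀ (k : ℕ) (nj : Fin k → ℕ)
    (M : Matrix ((j : Fin k) × Fin (nj j)) ((j : Fin k) × Fin (nj j)) ℝ), M.PosDef →
    M.det ≤ (∏ j, (M.submatrix (Sigma.mk j) (Sigma.mk j)).det) ∧
    (M.det = (∏ j, (M.submatrix (Sigma.mk j) (Sigma.mk j)).det) ↔
      ∀ j ℓ, j ≠ ℓ → ∀ a b, M ⟨j, a⟩ ⟨ℓ, b⟩ = 0) := by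
  intro k
  induction k with
  | zero =>
    intro nj M hM
    haveI : IsEmpty ((j : Fin 0) × Fin (nj j)) := ⟨fun q => q.1.elim0⟩
    rw [Matrix.det_isEmpty]
    simp
  | succ k ih =>
    intro nj M hM
    have hNpd : (M.submatrix (sigE nj) (sigE nj)).PosDef :=
      aux_pd_submatrix hM (sigE nj).injective
    obtain ⟨hle1, heq1⟩ := aux_fischer2 hNpd
    have hdetMN : M.det = (M.submatrix (sigE nj) (sigE nj)).det :=
      (Matrix.det_submatrix_equiv_self (sigE nj) M).symm
    have hA : (M.submatrix (sigE nj) (sigE nj)).toBlocks₁₁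
        = M.submatrix (Sigma.mk 0) (Sigma.mk 0) := rfl
    have hDpd : (M.submatrix (sigE nj) (sigE nj)).toBlocks₂₂.PosDef :=
      aux_pd_submatrix hNpd Sum.inr_injective
    obtain ⟨hle2, heq2⟩ := ih (fun j => nj j.succ) _ hDpd
    have hblocks : ∀ j : Fin k,
        ((M.submatrix (sigE nj) (sigE nj)).toBlocks₂₂.submatrix (Sigma.mk j) (Sigma.mk j))
        = M.submatrix (Sigma.mk j.succ) (Sigma.mk j.succ) := fun _ => rfl
    simp only [hblocks] at hle2 heq2
    have hprod : (∏ j : Fin (k+1), (M.submatrix (Sigma.mk j) (Sigma.mk j)).det)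
        = (M.submatrix (Sigma.mk 0) (Sigma.mk 0)).det
          * ∏ j : Fin k, (M.submatrix (Sigma.mk j.succ) (Sigma.mk j.succ)).det := by
      rw [Fin.prod_univ_succ]
    have hApos : 0 < (M.submatrix (Sigma.mk 0) (Sigma.mk 0)).det :=
      (aux_pd_submatrix hNpd Sum.inl_injective).det_pos
    rw [hA] at hle1 heq1
    have hDpos := hDpd.det_pos
    constructor
    · rw [hdetMN, hprod]
      calc (M.submatrix (sigE nj) (sigE nj)).det
          ≤ (M.submatrix (Sigma.mk 0) (Sigma.mk 0)).det
            * (M.submatrix (sigE nj) (sigE nj)).toBlocks₂₂.det := hle1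
        _ ≤ _ := by
            apply mul_le_mul_of_nonneg_left hle2 hApos.le
    · rw [hdetMN, hprod]
      constructor
      · intro h
        -- deduce both equalities
        have hDleP := hle2
        have h2 : (M.submatrix (sigE nj) (sigE nj)).toBlocks₂₂.det
            = ∏ j : Fin k, (M.submatrix (Sigma.mk j.succ) (Sigma.mk j.succ)).det := by
          by_contra hne
          have hlt := lt_of_le_of_ne hDleP hne
          have : (M.submatrix (sigE nj) (sigE nj)).det
              < (M.submatrix (Sigma.mk 0) (Sigma.mk 0)).det
                * ∏ j : Fin k, (M.submatrix (Sigma.mk j.succ) (Sigma.mk j.succ)).det := by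
            calc (M.submatrix (sigE nj) (sigE nj)).det
                ≤ (M.submatrix (Sigma.mk 0) (Sigma.mk 0)).det
                  * (M.submatrix (sigE nj) (sigE nj)).toBlocks₂₂.det := hle1
              _ < _ := by apply mul_lt_mul_of_pos_left hlt hApos
          exact absurd h this.ne
        have h1 : (M.submatrix (sigE nj) (sigE nj)).det
            = (M.submatrix (Sigma.mk 0) (Sigma.mk 0)).det
              * (M.submatrix (sigE nj) (sigE nj)).toBlocks₂₂.det := by
          rw [h2]; exact h
        have hB0 := heq1.mp h1
        have hDcond := heq2.mp h2
        -- now prove the full condition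
        intro j ℓ hne a b
        induction j using Fin.cases with
        | zero =>
          induction ℓ using Fin.cases with
          | zero => exact absurd rfl hne
          | succ ℓ' =>
            have := congrFun (congrFun hB0 a) ⟨ℓ', b⟩
            exact this
        | succ j' =>
          induction ℓ using Fin.cases with
          | zero =>
            have hsym : M ⟨j'.succ, a⟩ ⟨0, b⟩ = M ⟨0, b⟩ ⟨j'.succ, a⟩ :=
              aux_symm hM.isHermitian _ _
            rw [hsym]
            have := congrFun (congrFun hB0 b) ⟨j', a⟩
            exact this
          | succ ℓ' =>
            have hne' : j' ≠ ℓ' := fun hh => hne (by rw [hh])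
            exact hDcond j' ℓ' hne' a b
      · intro hcond
        have hB0 : (M.submatrix (sigE nj) (sigE nj)).toBlocks₁₂ = 0 := by
          ext a q
          exact hcond 0 q.1.succ (Fin.succ_ne_zero q.1).symm a q.2
        have hDcond : ∀ j ℓ : Fin k, j ≠ ℓ → ∀ a b,
            (M.submatrix (sigE nj) (sigE nj)).toBlocks₂₂ ⟨j, a⟩ ⟨ℓ, b⟩ = 0 := by
          intro j ℓ hne a b
          exact hcond j.succ ℓ.succ (fun hh => hne (Fin.succ_injective _ hh)) a b
        rw [heq1.mpr hB0, heq2.mpr hDcond]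

end AuxLemmas

lemma aux_swap {m n : Type*} [Fintype m] [Fintype n] [DecidableEq m] [DecidableEq n]
    (c : ℝ) (A : Matrix m n ℝ) :
    (1 + c • (A * Aᵀ)).det = (1 + c • (Aᵀ * A)).det := by
  rw [← Matrix.smul_mul, det_one_add_mul_comm, Matrix.mul_smul]

lemma aux_sval_sq {d m : ℕ} (A : Matrix (Fin d) (Fin m) ℝ) (p : Fin m) :
    sval A p ^ 2 = (Matrix.isHermitian_conjTranspose_mul_self A).eigenvalues
      (Tuple.sort ((Matrix.isHermitian_conjTranspose_mul_self A).eigenvalues) p.rev) :=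
  Real.sq_sqrt ((posSemidef_conjTranspose_mul_self A).eigenvalues_nonneg _)

lemma aux_det_sval {d m : ℕ} (A : Matrix (Fin d) (Fin m) ℝ) (c : ℝ) :
    (1 + c • (Aᵀ * A)).det = ∏ p, (1 + c * sval A p ^ 2) := by
  have ht : Aᵀ = Aᴴ := (aux_ct_eq_t A).symm
  rw [ht, aux_det_one_add_smul (Matrix.isHermitian_conjTranspose_mul_self A) c]
  rw [← Equiv.prod_comp ((Fin.revPerm).trans
    (Tuple.sort ((Matrix.isHermitian_conjTranspose_mul_self A).eigenvalues)))
    (fun i => 1 + c * (Matrix.isHermitian_conjTranspose_mul_self A).eigenvalues i)]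
  exact Finset.prod_congr rfl fun p _ => by rw [aux_sval_sq]; rfl

/-- Rate reduction upper bound in terms of block singular values, with equality iff the
blocks are pairwise orthogonal. -/
theorem stmt13 {d k n : ℕ} (ε : ℝ) (hε : 0 < ε) (nj : Fin k → ℕ)
    (hnj : ∀ j, 0 < nj j) (hn : n = ∑ j, nj j)
    (Z : (j : Fin k) → Matrix (Fin d) (Fin (nj j)) ℝ) :
    codingRate ε (blockConcat Z) - ∑ j, ((nj j : ℝ) / (n : ℝ)) * codingRate ε (Z j)
        ≤ (1 / (2 * (n : ℝ))) * ∑ j, ∑ p : Fin (nj j),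
            Real.log ((1 + ((d : ℝ) / (n * ε ^ 2)) * (sval (Z j) p) ^ 2) ^ n
              / (1 + ((d : ℝ) / (nj j * ε ^ 2)) * (sval (Z j) p) ^ 2) ^ (nj j)) ∧
    (codingRate ε (blockConcat Z) - ∑ j, ((nj j : ℝ) / (n : ℝ)) * codingRate ε (Z j)
        = (1 / (2 * (n : ℝ))) * ∑ j, ∑ p : Fin (nj j),
            Real.log ((1 + ((d : ℝ) / (n * ε ^ 2)) * (sval (Z j) p) ^ 2) ^ n
              / (1 + ((d : ℝ) / (nj j * ε ^ 2)) * (sval (Z j) p) ^ 2) ^ (nj j))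
      ↔ ∀ j ℓ : Fin k, j < ℓ → (Z j)ᵀ * (Z ℓ) = 0) := by
  by_cases hk : k = 0
  · subst hk
    have hn0 : n = 0 := by simpa using hn
    subst hn0
    haveI : IsEmpty ((j : Fin 0) × Fin (nj j)) := ⟨fun q => q.1.elim0⟩
    have hW : blockConcat Z * (blockConcat Z)ᵀ = 0 := by
      ext i j; simp [Matrix.mul_apply]
    have hcod : codingRate ε (blockConcat Z) = 0 := by
      simp [codingRate, hW]
    rw [hcod]
    constructor
    · simp
    · constructor
      · intro _ j; exact j.elim0
      · intro _; simp
  · -- main case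
    have hnpos : 0 < n := by
      rw [hn]
      exact Finset.sum_pos (fun j _ => hnj j)
        ⟨⟨0, Nat.pos_of_ne_zero hk⟩, Finset.mem_univ _⟩
    have hnR : (0:ℝ) < n := by exact_mod_cast hnpos
    have hα : (0:ℝ) ≤ (d : ℝ) / (n * ε ^ 2) := by positivity
    have hβ : ∀ j : Fin k, (0:ℝ) ≤ (d : ℝ) / (nj j * ε ^ 2) := fun j => by positivity
    -- matrices
    set W := blockConcat Z with hWdef
    have hcard : ((Fintype.card ((j : Fin k) × Fin (nj j)) : ℕ) : ℝ) = (n : ℝ) := by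
      rw [Fintype.card_sigma]
      simp [hn]
    -- positivity of factors
    have hfac1 : ∀ (j : Fin k) (p : Fin (nj j)),
        0 < 1 + (d : ℝ) / (n * ε ^ 2) * sval (Z j) p ^ 2 := fun j p => by
      have := mul_nonneg hα (sq_nonneg (sval (Z j) p)); linarith
    have hfac2 : ∀ (j : Fin k) (p : Fin (nj j)),
        0 < 1 + (d : ℝ) / (nj j * ε ^ 2) * sval (Z j) p ^ 2 := fun j p => by
      have := mul_nonneg (hβ j) (sq_nonneg (sval (Z j) p)); linarith
    have hMbdet : ∀ j : Fin k,
        ((1 : Matrix (Fin (nj j)) (Fin (nj j)) ℝ)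
          + ((d : ℝ) / (n * ε ^ 2)) • ((Z j)ᵀ * Z j)).det
        = ∏ p, (1 + (d : ℝ) / (n * ε ^ 2) * sval (Z j) p ^ 2) := fun j =>
      aux_det_sval (Z j) _
    have hNdet : ∀ j : Fin k,
        ((1 : Matrix (Fin (nj j)) (Fin (nj j)) ℝ)
          + ((d : ℝ) / (nj j * ε ^ 2)) • ((Z j)ᵀ * Z j)).det
        = ∏ p, (1 + (d : ℝ) / (nj j * ε ^ 2) * sval (Z j) p ^ 2) := fun j =>
      aux_det_sval (Z j) _
    have hMbpos : ∀ j : Fin k, 0 < ((1 : Matrix (Fin (nj j)) (Fin (nj j)) ℝ)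
        + ((d : ℝ) / (n * ε ^ 2)) • ((Z j)ᵀ * Z j)).det := fun j => by
      rw [hMbdet j]; exact Finset.prod_pos fun p _ => hfac1 j p
    have hNpos : ∀ j : Fin k, 0 < ((1 : Matrix (Fin (nj j)) (Fin (nj j)) ℝ)
        + ((d : ℝ) / (nj j * ε ^ 2)) • ((Z j)ᵀ * Z j)).det := fun j => by
      rw [hNdet j]; exact Finset.prod_pos fun p _ => hfac2 j p
    -- the big matrix
    set M : Matrix ((j : Fin k) × Fin (nj j)) ((j : Fin k) × Fin (nj j)) ℝ :=
      (1 : Matrix _ _ ℝ) + ((d : ℝ) / (n * ε ^ 2)) • (Wᵀ * W) with hMdef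
    have hMpd : M.PosDef := by
      apply aux_pd_add_psd Matrix.PosDef.one
      apply aux_psd_smul _ hα
      have := posSemidef_conjTranspose_mul_self W
      rwa [aux_ct_eq_t] at this
    have hMsub : ∀ j : Fin k, M.submatrix (Sigma.mk j) (Sigma.mk j)
        = (1 : Matrix (Fin (nj j)) (Fin (nj j)) ℝ)
          + ((d : ℝ) / (n * ε ^ 2)) • ((Z j)ᵀ * Z j) := by
      intro j
      ext a b
      have h1 : ((1 : Matrix ((j : Fin k) × Fin (nj j)) ((j : Fin k) × Fin (nj j)) ℝ))
          ⟨j, a⟩ ⟨j, b⟩ = ((1 : Matrix (Fin (nj j)) (Fin (nj j)) ℝ)) a b := by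
        by_cases hab : a = b
        · subst hab; simp
        · simp [Matrix.one_apply, hab]
      have h2 : (Wᵀ * W) ⟨j, a⟩ ⟨j, b⟩ = ((Z j)ᵀ * Z j) a b := rfl
      simp only [Matrix.submatrix_apply, hMdef, Matrix.add_apply, Matrix.smul_apply]
      rw [h1, h2]
    have hMoff : ∀ (j ℓ : Fin k) (a : Fin (nj j)) (b : Fin (nj ℓ)), j ≠ ℓ →
        M ⟨j, a⟩ ⟨ℓ, b⟩ = ((d : ℝ) / (n * ε ^ 2)) * ((Z j)ᵀ * Z ℓ) a b := by
      intro j ℓ a b hne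
      simp only [hMdef, Matrix.add_apply, Matrix.smul_apply, smul_eq_mul]
      rw [Matrix.one_apply_ne (by intro h; exact hne (congrArg Sigma.fst h))]
      rw [zero_add]
      rfl
    obtain ⟨hfle, hfeq⟩ := aux_fischer k nj M hMpd
    simp only [hMsub] at hfle hfeq
    have hprodpos : 0 < ∏ j, ((1 : Matrix (Fin (nj j)) (Fin (nj j)) ℝ)
        + ((d : ℝ) / (n * ε ^ 2)) • ((Z j)ᵀ * Z j)).det :=
      Finset.prod_pos fun j _ => hMbpos j
    -- log versions
    have hkey_le : Real.log M.det ≤ ∑ j, Real.log ((1 : Matrix (Fin (nj j)) (Fin (nj j)) ℝ)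
        + ((d : ℝ) / (n * ε ^ 2)) • ((Z j)ᵀ * Z j)).det := by
      rw [← Real.log_prod (fun j _ => (hMbpos j).ne')]
      exact (Real.log_le_log_iff hMpd.det_pos hprodpos).mpr hfle
    have hkey_eq : Real.log M.det = (∑ j, Real.log ((1 : Matrix (Fin (nj j)) (Fin (nj j)) ℝ)
        + ((d : ℝ) / (n * ε ^ 2)) • ((Z j)ᵀ * Z j)).det) ↔
        M.det = ∏ j, ((1 : Matrix (Fin (nj j)) (Fin (nj j)) ℝ)
          + ((d : ℝ) / (n * ε ^ 2)) • ((Z j)ᵀ * Z j)).det := by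
      rw [← Real.log_prod (fun j _ => (hMbpos j).ne')]
      constructor
      · intro h
        exact Real.log_injOn_pos (Set.mem_Ioi.mpr hMpd.det_pos)
          (Set.mem_Ioi.mpr hprodpos) h
      · intro h; rw [h]
    -- codingRate identities
    have hcodW : codingRate ε W = (1 / 2) * Real.log M.det := by
      rw [codingRate, hcard, hMdef, ← aux_swap]
    have hcodZ : ∀ j, codingRate ε (Z j)
        = (1 / 2) * Real.log ((1 : Matrix (Fin (nj j)) (Fin (nj j)) ℝ)
          + ((d : ℝ) / (nj j * ε ^ 2)) • ((Z j)ᵀ * Z j)).det := by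
      intro j
      rw [codingRate, ← aux_swap]
      norm_num
    -- per-block RHS terms
    have hterm : ∀ j : Fin k, (∑ p : Fin (nj j),
        Real.log ((1 + ((d : ℝ) / (n * ε ^ 2)) * (sval (Z j) p) ^ 2) ^ n
          / (1 + ((d : ℝ) / (nj j * ε ^ 2)) * (sval (Z j) p) ^ 2) ^ (nj j)))
        = (n : ℝ) * Real.log ((1 : Matrix (Fin (nj j)) (Fin (nj j)) ℝ)
            + ((d : ℝ) / (n * ε ^ 2)) • ((Z j)ᵀ * Z j)).det
          - (nj j : ℝ) * Real.log ((1 : Matrix (Fin (nj j)) (Fin (nj j)) ℝ)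
            + ((d : ℝ) / (nj j * ε ^ 2)) • ((Z j)ᵀ * Z j)).det := by
      intro j
      have hstep : ∀ p : Fin (nj j),
          Real.log ((1 + ((d : ℝ) / (n * ε ^ 2)) * (sval (Z j) p) ^ 2) ^ n
            / (1 + ((d : ℝ) / (nj j * ε ^ 2)) * (sval (Z j) p) ^ 2) ^ (nj j))
          = (n : ℝ) * Real.log (1 + ((d : ℝ) / (n * ε ^ 2)) * (sval (Z j) p) ^ 2)
            - (nj j : ℝ) * Real.log (1 + ((d : ℝ) / (nj j * ε ^ 2)) * (sval (Z j) p) ^ 2) := by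
        intro p
        rw [Real.log_div (pow_ne_zero _ (hfac1 j p).ne') (pow_ne_zero _ (hfac2 j p).ne'),
          Real.log_pow, Real.log_pow]
      rw [Finset.sum_congr rfl (fun p _ => hstep p), Finset.sum_sub_distrib,
        ← Finset.mul_sum, ← Finset.mul_sum,
        ← Real.log_prod (fun p _ => (hfac1 j p).ne'),
        ← Real.log_prod (fun p _ => (hfac2 j p).ne'),
        ← hMbdet j, ← hNdet j]
    -- algebra
    rw [hcodW,
      Finset.sum_congr rfl (fun j (_ : j ∈ Finset.univ) => by rw [hcodZ j]),
      Finset.sum_congr rfl (fun j (_ : j ∈ Finset.univ) => hterm j)]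
    have hexpand : (1 / (2 * (n:ℝ))) * ∑ j, ((n : ℝ) * Real.log ((1 : Matrix (Fin (nj j)) (Fin (nj j)) ℝ)
            + ((d : ℝ) / (n * ε ^ 2)) • ((Z j)ᵀ * Z j)).det
          - (nj j : ℝ) * Real.log ((1 : Matrix (Fin (nj j)) (Fin (nj j)) ℝ)
            + ((d : ℝ) / (nj j * ε ^ 2)) • ((Z j)ᵀ * Z j)).det)
        = (1/2) * (∑ j, Real.log ((1 : Matrix (Fin (nj j)) (Fin (nj j)) ℝ)
            + ((d : ℝ) / (n * ε ^ 2)) • ((Z j)ᵀ * Z j)).det)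
          - ∑ j, ((nj j : ℝ) / (n : ℝ)) * ((1 / 2) * Real.log ((1 : Matrix (Fin (nj j)) (Fin (nj j)) ℝ)
            + ((d : ℝ) / (nj j * ε ^ 2)) • ((Z j)ᵀ * Z j)).det) := by
      rw [Finset.mul_sum, Finset.mul_sum, ← Finset.sum_sub_distrib]
      refine Finset.sum_congr rfl fun j _ => ?_
      field_simp
    rw [hexpand]
    constructor
    · linarith [hkey_le]
    · have hiff1 : ((1 / 2) * Real.log M.det - ∑ j, ((nj j : ℝ) / (n : ℝ)) * ((1 / 2) * Real.log ((1 : Matrix (Fin (nj j)) (Fin (nj j)) ℝ)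
            + ((d : ℝ) / (nj j * ε ^ 2)) • ((Z j)ᵀ * Z j)).det)
          = (1/2) * (∑ j, Real.log ((1 : Matrix (Fin (nj j)) (Fin (nj j)) ℝ)
            + ((d : ℝ) / (n * ε ^ 2)) • ((Z j)ᵀ * Z j)).det)
          - ∑ j, ((nj j : ℝ) / (n : ℝ)) * ((1 / 2) * Real.log ((1 : Matrix (Fin (nj j)) (Fin (nj j)) ℝ)
            + ((d : ℝ) / (nj j * ε ^ 2)) • ((Z j)ᵀ * Z j)).det))
          ↔ Real.log M.det = ∑ j, Real.log ((1 : Matrix (Fin (nj j)) (Fin (nj j)) ℝ)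
            + ((d : ℝ) / (n * ε ^ 2)) • ((Z j)ᵀ * Z j)).det := by
        constructor <;> intro h <;> linarith
    -- chain the iffs
      rw [hiff1, hkey_eq, hfeq]
      -- final condition conversion
      by_cases hd : d = 0
      · subst hd
        constructor
        · intro _ j ℓ _
          ext a b
          simp [Matrix.mul_apply]
        · intro _ j ℓ hne a b
          rw [hMoff j ℓ a b hne]
          simp
      · have hdpos : (0:ℝ) < (d : ℝ) / (n * ε ^ 2) := by
          have : (0:ℝ) < (d:ℝ) := by exact_mod_cast Nat.pos_of_ne_zero hd
          positivity
        constructor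
        · intro h j ℓ hlt
          ext a b
          have := h j ℓ (ne_of_lt hlt) a b
          rw [hMoff j ℓ a b (ne_of_lt hlt)] at this
          have h0 : ((Z j)ᵀ * Z ℓ) a b = 0 := by
            rcases mul_eq_zero.mp this with h' | h'
            · exact absurd h' hdpos.ne'
            · exact h'
          simpa using h0
        · intro h j ℓ hne a b
          rw [hMoff j ℓ a b hne]
          rcases lt_or_gt_of_ne hne with hlt | hgt
          · rw [h j ℓ hlt]; simp
          · have h2 : (Z j)ᵀ * Z ℓ = ((Z ℓ)ᵀ * Z j)ᵀ := by
              rw [Matrix.transpose_mul, Matrix.transpose_transpose]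
            rw [h2, h ℓ j hgt]; simp
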